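/- arXiv:1005.3681 — 4 statements merged into one kernel-verified Lean document; each statement's English description precedes it below -/
import Mathlib

section
/- Let B > 0 and let (β_j)_{j≥0} be a sequence of reals with Σ_{j=0}^∞ β_j²·2^j ≤ B, so that p(a) = Σ_{j=0}^∞ β_j·a^j defines a function on [−1,1]. Then for every w in the closed unit ball of ℝⁿ there exists v ∈ ℓ²(I) with ‖v‖² ≤ B such that ⟨v, ψ(x)⟩ = p(⟨w,x⟩) for every x in the closed unit ball of ℝⁿ. -/
lemma sum_pow_funs {n j : ℕ} (h : Fin n → ℝ) :
    ∑ f : Fin j → Fin n, ∏ i, h (f i) = (∑ k, h k) ^ j := by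
  have := Finset.prod_univ_sum (fun _ : Fin j => (Finset.univ : Finset (Fin n))) (fun _ k => h k)
  simp only [Fintype.piFinset_univ] at this
  rw [← this, Finset.prod_const, Finset.card_univ, Fintype.card_fin]

lemma list_tsum_by_length {n : ℕ} (g : ℕ → ℝ) (u : Fin n → ℝ)
    (hs : Summable fun j => |g j| * (∑ k, |u k|) ^ j) :
    Summable (fun l : List (Fin n) => g l.length * (l.map u).prod) ∧
    ∑' l : List (Fin n), g l.length * (l.map u).prod = ∑' j, g j * (∑ k, u k) ^ j := by
  set σ : List (Fin n) ≃ Σ j, (Fin j → Fin n) := List.equivSigmaTuple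
  set F : (Σ j, (Fin j → Fin n)) → ℝ := fun p => g p.1 * ∏ i, u (p.2 i) with hF
  have hcomp : (fun l : List (Fin n) => g l.length * (l.map u).prod) = F ∘ σ := by
    funext l
    have h1 : F (σ l) = g (List.ofFn (σ l).2).length * ((List.ofFn (σ l).2).map u).prod := by
      simp [hF, List.prod_ofFn, Function.comp]
    have hsymm : List.ofFn (σ l).2 = l := by
      have := σ.symm_apply_apply l
      simpa [σ, List.equivSigmaTuple] using this
    simp only [Function.comp_apply, h1, hsymm]
  have hFabs : Summable fun p => |F p| := by
    rw [summable_sigma_of_nonneg (fun p => abs_nonneg _)]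
    refine ⟨fun j => Summable.of_finite, ?_⟩
    have : (fun j => ∑' f : Fin j → Fin n, |F ⟨j, f⟩|) =
        fun j => |g j| * (∑ k, |u k|) ^ j := by
      funext j
      rw [tsum_fintype, ← sum_pow_funs (fun k => |u k|), Finset.mul_sum]
      congr 1; funext f
      simp [hF, abs_mul, Finset.abs_prod]
    rw [this]; exact hs
  have hFs : Summable F := hFabs.of_abs
  refine ⟨hcomp ▸ hFs.comp_injective σ.injective, ?_⟩
  rw [hcomp]
  have h1 : ∑' l, (F ∘ σ) l = ∑' p, F p := σ.tsum_eq F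
  rw [h1, hFs.tsum_sigma]
  congr 1; funext j
  rw [tsum_fintype, ← sum_pow_funs u, Finset.mul_sum]

lemma sqrt_pow' (x : ℝ) (hx : 0 ≤ x) (j : ℕ) : Real.sqrt (x ^ j) = Real.sqrt x ^ j := by
  induction j with
  | zero => simp
  | succ k ih => rw [pow_succ, pow_succ, Real.sqrt_mul (by positivity), ih]

lemma sqrt2_cancel (j : ℕ) : Real.sqrt 2 ^ j * (2:ℝ) ^ (-(j:ℝ)/2) = 1 := by
  rw [← Real.rpow_natCast (Real.sqrt 2) j, Real.sqrt_eq_rpow,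
    ← Real.rpow_mul (by norm_num : (0:ℝ) ≤ 2),
    ← Real.rpow_add (by norm_num : (0:ℝ) < 2),
    show (1/2*(j:ℝ) + (-(j:ℝ)/2)) = 0 by ring, Real.rpow_zero]

/-- The feature map `ψ`: the entry of `ψ(x)` at a tuple `(k₁,…,k_j)` (a list over
`{1,…,n}`) is `2^{-j/2}·x_{k₁}⋯x_{k_j}`. -/
noncomputable def psiFun (n : ℕ) (x : EuclideanSpace ℝ (Fin n)) (l : List (Fin n)) : ℝ :=
  (2 : ℝ) ^ (-(l.length : ℝ) / 2) * (l.map fun k => x k).prod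

/-- every polynomial `p ∈ P_B` composed with a halfspace `w` is realized
as a linear functional `⟨v, ψ(·)⟩` with `‖v‖² ≤ B` in `ℓ²(I)`. -/
theorem polynomial_halfspace_in_HB
    (n : ℕ) (B : ℝ) (hB : 0 < B) (β : ℕ → ℝ)
    (hsum : Summable fun j => β j ^ 2 * 2 ^ j)
    (hle : (∑' j, β j ^ 2 * 2 ^ j) ≤ B)
    (w : EuclideanSpace ℝ (Fin n)) (hw : ‖w‖ ≤ 1) :
    ∃ v : List (Fin n) → ℝ, Memℓp v 2 ∧ (∑' l, (v l) ^ 2) ≤ B ∧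
      ∀ x : EuclideanSpace ℝ (Fin n), ‖x‖ ≤ 1 →
        (∑' l, v l * psiFun n x l) = ∑' j, β j * (inner ℝ w x : ℝ) ^ j := by
  classical
  set v : List (Fin n) → ℝ :=
    fun l => (β l.length * Real.sqrt 2 ^ l.length) * (l.map fun k => w k).prod with hv
  -- the sum ∑ w k ^ 2 equals ‖w‖² ≤ 1
  have hnorm_sq : ∀ y : EuclideanSpace ℝ (Fin n), (∑ k, y k ^ 2) = ‖y‖ ^ 2 := by
    intro y
    rw [EuclideanSpace.norm_eq, Real.sq_sqrt (by positivity)]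
    simp [Real.norm_eq_abs, sq_abs]
  have hs_le : (∑ k, w k ^ 2) ≤ 1 := by
    rw [hnorm_sq]
    nlinarith [norm_nonneg w]
  have hs_nonneg : (0:ℝ) ≤ ∑ k, w k ^ 2 := by positivity
  -- squares of v
  set g2 : ℕ → ℝ := fun j => β j ^ 2 * 2 ^ j with hg2
  have habs2 : ∀ j, |g2 j| * (∑ k, |w k ^ 2|) ^ j = g2 j * (∑ k, w k ^ 2) ^ j := by
    intro j
    congr 1
    · rw [abs_of_nonneg (by positivity)]
    · congr 1; exact Finset.sum_congr rfl fun k _ => abs_of_nonneg (by positivity)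
  have hs2 : Summable fun j => |g2 j| * (∑ k, |w k ^ 2|) ^ j := by
    apply Summable.of_nonneg_of_le (fun j => by positivity) _ hsum
    intro j
    rw [habs2 j]
    calc g2 j * (∑ k, w k ^ 2) ^ j ≤ g2 j * 1 := by
          apply mul_le_mul_of_nonneg_left _ (by positivity)
          exact pow_le_one₀ hs_nonneg hs_le
      _ = β j ^ 2 * 2 ^ j := by rw [mul_one]
  obtain ⟨S2, E2⟩ := list_tsum_by_length g2 (fun k => w k ^ 2) hs2
  have hv2 : ∀ l, v l ^ 2 = g2 l.length * (l.map fun k => w k ^ 2).prod := by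
    intro l
    have hprod : (l.map fun k => w k ^ 2).prod
        = (l.map fun k => w k).prod * (l.map fun k => w k).prod := by
      rw [← List.prod_map_mul]
      congr 1; exact List.map_congr_left fun k _ => sq (w k)
    have hpow : (Real.sqrt 2 ^ l.length) ^ 2 = 2 ^ l.length := by
      rw [← pow_mul, mul_comm, pow_mul, Real.sq_sqrt (by norm_num : (0:ℝ) ≤ 2)]
    simp only [hv, hg2]
    rw [hprod]
    calc (β l.length * Real.sqrt 2 ^ l.length * (l.map fun k => w k).prod) ^ 2
        = β l.length ^ 2 * (Real.sqrt 2 ^ l.length) ^ 2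
          * ((l.map fun k => w k).prod * (l.map fun k => w k).prod) := by ring
      _ = β l.length ^ 2 * 2 ^ l.length
          * ((l.map fun k => w k).prod * (l.map fun k => w k).prod) := by rw [hpow]
  have hv2f : (fun l => v l ^ 2) = fun l : List (Fin n) =>
      g2 l.length * (l.map fun k => w k ^ 2).prod := funext hv2
  have hsum_v2 : Summable fun l => v l ^ 2 := by rw [hv2f]; exact S2
  refine ⟨v, ?_, ?_, ?_⟩
  · -- Memℓp
    apply memℓp_gen
    have : (fun l => ‖v l‖ ^ (2 : ENNReal).toReal) = fun l => v l ^ 2 := by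
      funext l
      rw [show ((2 : ENNReal).toReal) = ((2:ℕ):ℝ) by norm_num, Real.rpow_natCast,
        Real.norm_eq_abs, sq_abs]
    rw [this]; exact hsum_v2
  · -- norm bound
    rw [hv2f, E2]
    have hsum2' : Summable fun j => g2 j * (∑ k, w k ^ 2) ^ j := by
      have := hs2; rwa [funext habs2] at this
    refine le_trans (Summable.tsum_le_tsum ?_ hsum2' hsum) hle
    intro j
    calc g2 j * (∑ k, w k ^ 2) ^ j ≤ g2 j * 1 :=
          mul_le_mul_of_nonneg_left (pow_le_one₀ hs_nonneg hs_le) (by positivity)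
      _ = β j ^ 2 * 2 ^ j := by rw [mul_one]
  · -- the representation
    intro x hx
    -- summability of the β-series against |w k * x k|
    have hβB : ∀ j, β j ^ 2 * 2 ^ j ≤ B := fun j =>
      le_trans (Summable.le_tsum hsum j fun i _ => by positivity) hle
    set r : ℝ := Real.sqrt 2⁻¹ with hr
    have hr0 : 0 ≤ r := Real.sqrt_nonneg _
    have hr1 : r < 1 := by
      rw [hr]
      nlinarith [Real.sq_sqrt (by norm_num : (0:ℝ) ≤ 2⁻¹), Real.sqrt_nonneg (2⁻¹:ℝ)]
    have hβ_le : ∀ j, |β j| ≤ Real.sqrt B * r ^ j := by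
      intro j
      have h1 : β j ^ 2 ≤ B * (2⁻¹)^j := by
        have h2 : (0:ℝ) < 2 ^ j := by positivity
        rw [inv_pow, ← div_eq_mul_inv, le_div_iff₀ h2]
        exact hβB j
      calc |β j| = Real.sqrt (β j ^ 2) := (Real.sqrt_sq_eq_abs _).symm
        _ ≤ Real.sqrt (B * (2⁻¹)^j) := Real.sqrt_le_sqrt h1
        _ = Real.sqrt B * r ^ j := by
            rw [Real.sqrt_mul hB.le, sqrt_pow' _ (by norm_num), hr]
    -- ∑ |w k * x k| ≤ 1 via Cauchy–Schwarz
    set W : EuclideanSpace ℝ (Fin n) := WithLp.toLp 2 (fun k => |w k|) with hW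
    set X : EuclideanSpace ℝ (Fin n) := WithLp.toLp 2 (fun k => |x k|) with hX
    have hm : (∑ k, |w k * x k|) = (inner ℝ W X : ℝ) := by
      simp [PiLp.inner_apply, RCLike.inner_apply, hW, hX, abs_mul, mul_comm]
    have hWn : ‖W‖ = ‖w‖ := by rw [EuclideanSpace.norm_eq, EuclideanSpace.norm_eq]; simp [hW]
    have hXn : ‖X‖ = ‖x‖ := by rw [EuclideanSpace.norm_eq, EuclideanSpace.norm_eq]; simp [hX]
    have hm1 : (∑ k, |w k * x k|) ≤ 1 := by
      rw [hm]
      calc (inner ℝ W X : ℝ) ≤ ‖W‖ * ‖X‖ := real_inner_le_norm W X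
        _ = ‖w‖ * ‖x‖ := by rw [hWn, hXn]
        _ ≤ 1 := by nlinarith [norm_nonneg w, norm_nonneg x]
    have hm0 : (0:ℝ) ≤ ∑ k, |w k * x k| := by positivity
    have hs3 : Summable fun j => |β j| * (∑ k, |w k * x k|) ^ j := by
      apply Summable.of_nonneg_of_le (fun j => by positivity)
        (fun j => ?_) (((summable_geometric_of_lt_one hr0 hr1).mul_left (Real.sqrt B)))
      calc |β j| * (∑ k, |w k * x k|) ^ j ≤ |β j| * 1 :=
            mul_le_mul_of_nonneg_left (pow_le_one₀ hm0 hm1) (abs_nonneg _)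
        _ = |β j| := mul_one _
        _ ≤ Real.sqrt B * r ^ j := hβ_le j
    obtain ⟨S3, E3⟩ := list_tsum_by_length β (fun k => w k * x k) hs3
    have hψ : ∀ l, v l * psiFun n x l = β l.length * (l.map fun k => w k * x k).prod := by
      intro l
      have hprod : (l.map fun k => w k * x k).prod
          = (l.map fun k => w k).prod * (l.map fun k => x k).prod := List.prod_map_mul
      simp only [hv, psiFun]
      rw [hprod]
      have hc := sqrt2_cancel l.length
      calc β l.length * Real.sqrt 2 ^ l.length * (l.map fun k => w k).prod
            * ((2:ℝ) ^ (-(l.length : ℝ) / 2) * (l.map fun k => x k).prod)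
          = β l.length * (Real.sqrt 2 ^ l.length * (2:ℝ) ^ (-(l.length : ℝ) / 2))
            * ((l.map fun k => w k).prod * (l.map fun k => x k).prod) := by ring
        _ = β l.length * ((l.map fun k => w k).prod * (l.map fun k => x k).prod) := by
            rw [hc, mul_one]
    have : (fun l => v l * psiFun n x l)
        = fun l : List (Fin n) => β l.length * (l.map fun k => w k * x k).prod := funext hψ
    rw [this, E3]
    have hinner : (inner ℝ w x : ℝ) = ∑ k, w k * x k := by
      simp [PiLp.inner_apply, RCLike.inner_apply, mul_comm]
    rw [hinner]
end

section
/- For any x, x' in the closed unit ball of ℝⁿ, the vector ψ(x) lies in ℓ²(I) and ⟨ψ(x), ψ(x')⟩ = Σ_{j=0}^∞ 2^{−j}·(⟨x,x'⟩)^j = 1/(1 − (1/2)·⟨x,x'⟩). -/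
lemma list_prod_map_eq (n : ℕ) (r : Fin n → ℝ) (l : List (Fin n)) :
    (l.map r).prod = ∏ i, r (l.get i) := by
  conv_lhs => rw [← List.ofFn_get l]
  rw [List.map_ofFn, List.prod_ofFn]
  rfl

lemma aux_summable_tsum (n : ℕ) (r : Fin n → ℝ) (h : ∑ k, |r k| < 1) :
    Summable (fun l : List (Fin n) => (l.map r).prod) ∧
    ∑' l : List (Fin n), (l.map r).prod = ∑' j : ℕ, (∑ k, r k) ^ j := by
  set F : ((j : ℕ) × (Fin j → Fin n)) → ℝ := fun p => ∏ i, r (p.2 i) with hF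
  have habs : Summable fun p : (j : ℕ) × (Fin j → Fin n) => |F p| := by
    rw [summable_sigma_of_nonneg (fun p => abs_nonneg _)]
    constructor
    · intro j; exact Summable.of_finite
    · have key : ∀ j : ℕ, (∑' p : Fin j → Fin n, |F ⟨j, p⟩|) = (∑ k, |r k|) ^ j := by
        intro j
        rw [tsum_fintype, Fintype.sum_pow]
        simp [hF, Finset.abs_prod]
      simp_rw [key]
      exact summable_geometric_of_lt_one (Finset.sum_nonneg fun k _ => abs_nonneg _) h
  have hFsum : Summable F := habs.of_abs
  have hsum : Summable (fun l : List (Fin n) => (l.map r).prod) := by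
    have : (fun l : List (Fin n) => (l.map r).prod) = F ∘ List.equivSigmaTuple := by
      funext l
      show _ = F ⟨l.length, l.get⟩
      simp only [hF]
      exact list_prod_map_eq n r l
    rw [this]
    exact hFsum.comp_injective (Equiv.injective _)
  refine ⟨hsum, ?_⟩
  have he : ∑' l : List (Fin n), (l.map r).prod = ∑' p, F p := by
    rw [← Equiv.tsum_eq (List.equivSigmaTuple (α := Fin n)) F]
    congr 1
    funext l
    show _ = F ⟨l.length, l.get⟩
    simp only [hF]
    exact list_prod_map_eq n r l
  rw [he, Summable.tsum_sigma hFsum]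
  congr 1
  funext j
  rw [tsum_fintype, Fintype.sum_pow]

lemma half_prod (n : ℕ) (a b : Fin n → ℝ) (l : List (Fin n)) :
    (l.map (fun k => a k * b k / 2)).prod
      = (1/2 : ℝ) ^ l.length * ((l.map a).prod * (l.map b).prod) := by
  induction l with
  | nil => simp
  | cons hd tl ih => simp only [List.map_cons, List.prod_cons, List.length_cons, ih]; ring

lemma prod_key (n : ℕ) (x x' : EuclideanSpace ℝ (Fin n)) (l : List (Fin n)) :
    psiFun n x l * psiFun n x' l = (l.map (fun k => x k * x' k / 2)).prod := by
  rw [half_prod]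
  unfold psiFun
  have h2 : ((2:ℝ) ^ (-(l.length : ℝ) / 2)) * ((2:ℝ) ^ (-(l.length : ℝ) / 2))
      = (1/2 : ℝ) ^ l.length := by
    rw [← Real.rpow_add (by norm_num : (0:ℝ) < 2)]
    have : -(l.length : ℝ) / 2 + -(l.length : ℝ) / 2 = -(l.length : ℝ) := by ring
    rw [this, Real.rpow_neg (by norm_num), Real.rpow_natCast, one_div, inv_pow]
  calc (2:ℝ) ^ (-(l.length : ℝ) / 2) * (l.map fun k => x k).prod *
        ((2:ℝ) ^ (-(l.length : ℝ) / 2) * (l.map fun k => x' k).prod)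
      = ((2:ℝ) ^ (-(l.length : ℝ) / 2) * (2:ℝ) ^ (-(l.length : ℝ) / 2)) *
        ((l.map fun k => x k).prod * (l.map fun k => x' k).prod) := by ring
    _ = _ := by rw [h2]

lemma inner_eq_sum (n : ℕ) (x x' : EuclideanSpace ℝ (Fin n)) :
    (inner ℝ x x' : ℝ) = ∑ k, x k * x' k := by
  simp [PiLp.inner_apply, RCLike.inner_apply, conj_trivial, mul_comm]

lemma sum_abs_lt (n : ℕ) (x x' : EuclideanSpace ℝ (Fin n)) (hx : ‖x‖ ≤ 1) (hx' : ‖x'‖ ≤ 1) :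
    ∑ k, |x k * x' k / 2| < 1 := by
  have hx2 : ∑ k, x k * x k ≤ 1 := by
    have := real_inner_self_eq_norm_sq x
    rw [inner_eq_sum] at this
    nlinarith [norm_nonneg x]
  have hx'2 : ∑ k, x' k * x' k ≤ 1 := by
    have := real_inner_self_eq_norm_sq x'
    rw [inner_eq_sum] at this
    nlinarith [norm_nonneg x']
  have hle : ∑ k, |x k * x' k / 2| ≤ ∑ k, (x k * x k + x' k * x' k) / 4 := by
    apply Finset.sum_le_sum
    intro k _
    rw [abs_div, abs_mul]
    have h1 : |x k| * |x' k| ≤ (x k * x k + x' k * x' k) / 2 := by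
      nlinarith [sq_nonneg (|x k| - |x' k|), sq_abs (x k), sq_abs (x' k)]
    rw [abs_two]
    linarith
  have : ∑ k, (x k * x k + x' k * x' k) / 4 ≤ 1/2 := by
    rw [← Finset.sum_div, Finset.sum_add_distrib]
    linarith
  linarith

/-- `ψ(x) ∈ ℓ²(I)` and `⟨ψ(x), ψ(x')⟩ = Σ_j 2^{-j}·⟨x,x'⟩^j
= 1/(1 - ⟨x,x'⟩/2)` for `x, x'` in the unit ball. -/
theorem psi_inner_eq_kernel
    (n : ℕ) (x x' : EuclideanSpace ℝ (Fin n)) (hx : ‖x‖ ≤ 1) (hx' : ‖x'‖ ≤ 1) :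
    Memℓp (psiFun n x) 2 ∧
      (∑' l, psiFun n x l * psiFun n x' l) =
        (∑' j : ℕ, (2 : ℝ) ^ (-(j : ℤ)) * (inner ℝ x x' : ℝ) ^ j) ∧
      (∑' l, psiFun n x l * psiFun n x' l) = 1 / (1 - (1 / 2) * (inner ℝ x x' : ℝ)) := by
  have hmain := aux_summable_tsum n (fun k => x k * x' k / 2) (sum_abs_lt n x x' hx hx')
  have hkey : (fun l : List (Fin n) => psiFun n x l * psiFun n x' l)
      = fun l => (l.map (fun k => x k * x' k / 2)).prod := funext (prod_key n x x')
  have hs : ∑ k, x k * x' k / 2 = (inner ℝ x x' : ℝ) / 2 := by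
    rw [← Finset.sum_div, inner_eq_sum]
  refine ⟨?_, ?_, ?_⟩
  · apply memℓp_gen
    have hself := aux_summable_tsum n (fun k => x k * x k / 2) (sum_abs_lt n x x hx hx)
    have : (fun l : List (Fin n) => ‖psiFun n x l‖ ^ (2 : ENNReal).toReal)
        = fun l => (l.map (fun k => x k * x k / 2)).prod := by
      funext l
      rw [← prod_key n x x l]
      have ht : ((2 : ENNReal).toReal) = ((2:ℕ) : ℝ) := by norm_num
      rw [ht, Real.rpow_natCast]
      rw [show ‖psiFun n x l‖ ^ (2:ℕ) = |psiFun n x l| ^ 2 from rfl, sq_abs, sq]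
    rw [this]
    exact hself.1
  · rw [hkey, hmain.2, hs]
    congr 1
    funext j
    rw [div_pow, zpow_neg, zpow_natCast]
    ring
  · rw [hkey, hmain.2, hs]
    have hlt : ‖(inner ℝ x x' : ℝ) / 2‖ < 1 := by
      have := abs_real_inner_le_norm x x'
      rw [Real.norm_eq_abs, abs_div, abs_two]
      nlinarith [norm_nonneg x, norm_nonneg x']
    rw [tsum_geometric_of_norm_lt_one hlt, one_div]
    congr 1
    ring
end

section
/- Let (β_j)_{j≥0} be a sequence of reals with Σ_{j=0}^∞ β_j²·2^j < ∞, and let w be in the closed unit ball of ℝⁿ. Define v_w ∈ ℝ^I to have entry β_j·2^{j/2}·w_{k₁}⋯w_{k_j} at tuple (k₁,…,k_j). Then v_w ∈ ℓ²(I) with ‖v_w‖² = Σ_{j=0}^∞ β_j²·2^j·(‖w‖²)^j ≤ Σ_{j=0}^∞ β_j²·2^j, and for every x in the closed unit ball of ℝⁿ, ⟨v_w, ψ(x)⟩ = Σ_{j=0}^∞ β_j·(⟨w,x⟩)^j. -/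
/-- The vector `v_w` whose entry at a tuple `(k₁,…,k_j)` is `β_j·2^{j/2}·w_{k₁}⋯w_{k_j}`. -/
noncomputable def vwFun (n : ℕ) (β : ℕ → ℝ) (w : EuclideanSpace ℝ (Fin n))
    (l : List (Fin n)) : ℝ :=
  β l.length * (2 : ℝ) ^ ((l.length : ℝ) / 2) * (l.map fun k => w k).prod

private lemma two_rpow_half_sq (j : ℕ) : ((2:ℝ) ^ ((j:ℝ)/2))^2 = 2^j := by
  rw [← Real.rpow_natCast ((2:ℝ) ^ ((j:ℝ)/2)) 2, ← Real.rpow_mul (by norm_num)]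
  norm_num

private lemma two_rpow_half_cancel (j : ℕ) :
    (2:ℝ)^((j:ℝ)/2) * 2^(-(j:ℝ)/2) = 1 := by
  rw [← Real.rpow_add two_pos, show (j:ℝ)/2 + -(j:ℝ)/2 = 0 by ring, Real.rpow_zero]

/-- for coefficients with `Σ_j β_j²·2^j < ∞` and `w` in the unit ball,
`v_w ∈ ℓ²(I)` with `‖v_w‖² = Σ_j β_j²·2^j·(‖w‖²)^j ≤ Σ_j β_j²·2^j`, and
`⟨v_w, ψ(x)⟩ = Σ_j β_j·⟨w,x⟩^j` for all `x` in the unit ball. -/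
theorem vw_in_l2_and_inner
    (n : ℕ) (β : ℕ → ℝ) (hβ : Summable fun j => β j ^ 2 * 2 ^ j)
    (w : EuclideanSpace ℝ (Fin n)) (hw : ‖w‖ ≤ 1) :
    Memℓp (vwFun n β w) 2 ∧
      (∑' l, (vwFun n β w l) ^ 2) = (∑' j : ℕ, β j ^ 2 * 2 ^ j * (‖w‖ ^ 2) ^ j) ∧
      (∑' l, (vwFun n β w l) ^ 2) ≤ (∑' j : ℕ, β j ^ 2 * 2 ^ j) ∧
      ∀ x : EuclideanSpace ℝ (Fin n), ‖x‖ ≤ 1 →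
        (∑' l, vwFun n β w l * psiFun n x l) = ∑' j : ℕ, β j * (inner ℝ w x : ℝ) ^ j := by
  classical
  set e := (List.equivSigmaTuple (α := Fin n)).symm with he
  set S : ℝ := ∑ k, w k ^ 2 with hS
  have hnorm : ‖w‖ ^ 2 = S := by
    rw [EuclideanSpace.norm_eq, Real.sq_sqrt (by positivity)]
    simp [sq_abs, hS]
  have hS0 : (0:ℝ) ≤ S := by positivity
  have hS1 : S ≤ 1 := by
    rw [← hnorm]
    nlinarith [norm_nonneg w]
  -- squared entries on fibers
  have hfib : ∀ (j : ℕ) (v : Fin j → Fin n),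
      (vwFun n β w (List.ofFn v))^2 = β j ^ 2 * 2 ^ j * ∏ i, (w (v i))^2 := by
    intro j v
    simp only [vwFun, List.length_ofFn, List.map_ofFn, List.prod_ofFn, Function.comp]
    rw [mul_pow, mul_pow, two_rpow_half_sq, ← Finset.prod_pow]
  have hfibsum : ∀ j : ℕ, ∑ v : Fin j → Fin n, (vwFun n β w (List.ofFn v))^2
      = β j ^ 2 * 2 ^ j * S ^ j := by
    intro j
    simp only [hfib]
    rw [← Finset.mul_sum, hS, Fintype.sum_pow]
  have hβS : Summable fun j : ℕ => β j ^ 2 * 2 ^ j * S ^ j := by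
    refine Summable.of_nonneg_of_le (fun j => by positivity) (fun j => ?_) hβ
    calc β j ^ 2 * 2 ^ j * S ^ j ≤ β j ^ 2 * 2 ^ j * 1 := by
          have := pow_le_one₀ hS0 hS1 (n := j)
          have h0 : (0:ℝ) ≤ β j ^ 2 * 2 ^ j := by positivity
          nlinarith
      _ = β j ^ 2 * 2 ^ j := mul_one _
  set F : (Σ j : ℕ, Fin j → Fin n) → ℝ :=
    fun p => (vwFun n β w (List.ofFn p.2))^2 with hF
  have hFsum : Summable F := by
    refine (summable_sigma_of_nonneg (fun p => sq_nonneg _)).2 ⟨fun j => .of_finite, ?_⟩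
    have heq : (fun j : ℕ => ∑' v : Fin j → Fin n, F ⟨j, v⟩)
        = fun j => β j ^ 2 * 2 ^ j * S ^ j := by
      funext j; rw [tsum_fintype]; exact hfibsum j
    rw [heq]; exact hβS
  have hcomp : (fun l => (vwFun n β w l)^2) ∘ e = F := rfl
  have hsq : Summable fun l => (vwFun n β w l)^2 := by
    rw [← e.summable_iff]; exact hcomp ▸ hFsum
  have htsum_sq : (∑' l, (vwFun n β w l)^2) = ∑' j : ℕ, β j ^ 2 * 2 ^ j * S ^ j := by
    rw [← Equiv.tsum_eq e (fun l => (vwFun n β w l)^2)]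
    have : ∑' p, F p = ∑' j : ℕ, ∑' v : Fin j → Fin n, F ⟨j, v⟩ := Summable.tsum_sigma' (fun j => .of_finite) hFsum
    rw [show ∑' p, (fun l => (vwFun n β w l)^2) (e p) = ∑' p, F p from rfl, this]
    congr 1; funext j; rw [tsum_fintype]; exact hfibsum j
  refine ⟨?_, ?_, ?_, ?_⟩
  · -- Memℓp
    apply memℓp_gen
    have : (fun l => ‖vwFun n β w l‖ ^ (2:ENNReal).toReal)
        = fun l => (vwFun n β w l)^2 := by
      funext l
      rw [show ((2:ENNReal)).toReal = ((2:ℕ):ℝ) by simp, Real.rpow_natCast]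
      simp [Real.norm_eq_abs, sq_abs]
    rw [this]; exact hsq
  · rw [htsum_sq, hnorm]
  · rw [htsum_sq]
    refine Summable.tsum_le_tsum (fun j => ?_) hβS hβ
    have := pow_le_one₀ hS0 hS1 (n := j)
    have h0 : (0:ℝ) ≤ β j ^ 2 * 2 ^ j := by positivity
    nlinarith
  · intro x hx
    have hinner : (inner ℝ w x : ℝ) = ∑ k, w k * x k := by
      simp [PiLp.inner_apply, RCLike.inner_apply, mul_comm]
    have hx2 : ∑ k, x k ^ 2 ≤ 1 := by
      have : ‖x‖ ^ 2 = ∑ k, x k ^ 2 := by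
        rw [EuclideanSpace.norm_eq, Real.sq_sqrt (by positivity)]
        simp [sq_abs]
      rw [← this]; nlinarith [norm_nonneg x]
    -- fiber values of the product
    have gfib : ∀ (j : ℕ) (v : Fin j → Fin n),
        vwFun n β w (List.ofFn v) * psiFun n x (List.ofFn v)
          = β j * ∏ i, (w (v i) * x (v i)) := by
      intro j v
      simp only [vwFun, psiFun, List.length_ofFn, List.map_ofFn, List.prod_ofFn,
        Function.comp]
      rw [Finset.prod_mul_distrib]
      have h1 := two_rpow_half_cancel j
      have : β j * (2:ℝ)^((j:ℝ)/2) * (∏ i, w (v i)) *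
            ((2:ℝ)^(-(j:ℝ)/2) * ∏ i, x (v i))
          = β j * ((2:ℝ)^((j:ℝ)/2) * 2^(-(j:ℝ)/2)) *
            ((∏ i, w (v i)) * ∏ i, x (v i)) := by ring
      rw [this, h1, mul_one]
    set T : ℝ := ∑ k, |w k * x k| with hT
    have hT0 : 0 ≤ T := Finset.sum_nonneg fun _ _ => abs_nonneg _
    have hT1 : T ≤ 1 := by
      have hstep : T ≤ ∑ k, (w k ^ 2 + x k ^ 2)/2 := by
        refine Finset.sum_le_sum fun k _ => ?_
        rw [abs_mul]
        nlinarith [sq_nonneg (|w k| - |x k|), sq_abs (w k), sq_abs (x k)]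
      have : ∑ k, (w k ^ 2 + x k ^ 2)/2 = (S + ∑ k, x k ^ 2)/2 := by
        rw [hS, ← Finset.sum_add_distrib, ← Finset.sum_div]
      linarith
    -- summability of |β|
    have hβabs : Summable fun j : ℕ => |β j| := by
      have hsum2 : Summable fun j : ℕ => (β j ^ 2 * 2 ^ j + (1/2:ℝ)^j)/2 :=
        (hβ.add (summable_geometric_of_lt_one (by norm_num) (by norm_num))).div_const 2
      refine Summable.of_nonneg_of_le (fun j => abs_nonneg _) (fun j => ?_) hsum2
      have h2 : Real.sqrt ((2:ℝ)^j) * Real.sqrt ((1/2:ℝ)^j) = 1 := by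
        rw [← Real.sqrt_mul (by positivity), ← mul_pow]; norm_num
      have ha : (β j * Real.sqrt ((2:ℝ)^j))^2 = β j ^ 2 * 2 ^ j := by
        rw [mul_pow, Real.sq_sqrt (by positivity)]
      have hb : (Real.sqrt ((1/2:ℝ)^j))^2 = (1/2:ℝ)^j :=
        Real.sq_sqrt (by positivity)
      have hβeq : |β j| = |β j * Real.sqrt ((2:ℝ)^j)| * |Real.sqrt ((1/2:ℝ)^j)| := by
        rw [← abs_mul, mul_assoc, h2, mul_one]
      rw [hβeq]
      nlinarith [sq_nonneg (|β j * Real.sqrt ((2:ℝ)^j)| - |Real.sqrt ((1/2:ℝ)^j)|),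
        sq_abs (β j * Real.sqrt ((2:ℝ)^j)), sq_abs (Real.sqrt ((1/2:ℝ)^j)), ha, hb]
    set G : (Σ j : ℕ, Fin j → Fin n) → ℝ :=
      fun p => vwFun n β w (List.ofFn p.2) * psiFun n x (List.ofFn p.2) with hG
    have habs_fib : ∀ j : ℕ, ∑ v : Fin j → Fin n, |G ⟨j, v⟩| = |β j| * T ^ j := by
      intro j
      have habs : ∀ v : Fin j → Fin n,
          |G ⟨j, v⟩| = |β j| * ∏ i, |w (v i) * x (v i)| := fun v => by
        rw [show G ⟨j, v⟩ = _ from gfib j v, abs_mul, Finset.abs_prod]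
      simp only [habs]
      rw [← Finset.mul_sum, hT, Fintype.sum_pow]
    have hGabs : Summable fun p => |G p| := by
      refine (summable_sigma_of_nonneg (fun p => abs_nonneg _)).2 ⟨fun j => .of_finite, ?_⟩
      have heq : (fun j : ℕ => ∑' v : Fin j → Fin n, |G ⟨j, v⟩|)
          = fun j => |β j| * T ^ j := by
        funext j; rw [tsum_fintype]; exact habs_fib j
      rw [heq]
      refine Summable.of_nonneg_of_le (fun j => by positivity) (fun j => ?_) hβabs
      calc |β j| * T ^ j ≤ |β j| * 1 :=
            mul_le_mul_of_nonneg_left (pow_le_one₀ hT0 hT1) (abs_nonneg _)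
        _ = |β j| := mul_one _
    have hGsum : Summable G := summable_abs_iff.mp hGabs
    rw [← Equiv.tsum_eq e (fun l => vwFun n β w l * psiFun n x l)]
    have : ∑' p, G p = ∑' j : ℕ, ∑' v : Fin j → Fin n, G ⟨j, v⟩ :=
      Summable.tsum_sigma' (fun j => .of_finite) hGsum
    rw [show ∑' p, (fun l => vwFun n β w l * psiFun n x l) (e p) = ∑' p, G p from rfl, this]
    congr 1; funext j
    rw [tsum_fintype]
    simp only [hG, gfib]
    rw [← Finset.mul_sum, hinner, Fintype.sum_pow]
end

section
/- Let μ > 0, let ε ∈ (0,1), and set L = (1/(4μ))·log((2 − ε)/ε). Let D be a probability distribution over X × {0,1}, where X is the closed unit ball of a real Hilbert space. Then for every w with ‖w‖ = 1, E_{(x,y)∼D}[|φ_sig(⟨w,x⟩) − y|] ≤ err_{D,μ}(w) + ε/2. -/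
open MeasureTheory

/-- The sigmoid transfer function `φ_sig(a) = 1/(1+exp(-4·L·a))`. -/
noncomputable def phiSig (L a : ℝ) : ℝ := 1 / (1 + Real.exp (-4 * L * a))

/-- with `L = (1/(4μ))·log((2-ε)/ε)`, the error of `x ↦ φ_sig(⟨w,x⟩)`
is at most the `μ`-margin error rate of the halfspace `w` plus `ε/2`. -/
theorem phiSig_err_le_margin_err
    {E : Type*} [NormedAddCommGroup E] [InnerProductSpace ℝ E]
    [MeasurableSpace E] [BorelSpace E]
    (μ ε L : ℝ) (hμ : 0 < μ) (hε : ε ∈ Set.Ioo (0 : ℝ) 1)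
    (hL : L = (1 / (4 * μ)) * Real.log ((2 - ε) / ε))
    (D : Measure (E × ℝ)) [IsProbabilityMeasure D]
    (hD : ∀ᵐ p ∂D, ‖p.1‖ ≤ 1 ∧ (p.2 = 0 ∨ p.2 = 1))
    (w : E) (hw : ‖w‖ = 1) :
    (∫ p, |phiSig L (inner ℝ w p.1) - p.2| ∂D) ≤
      (D {p : E × ℝ |
        ((if 0 < (inner ℝ w p.1 : ℝ) then (1 : ℝ) else 0) ≠ p.2) ∨
          |(inner ℝ w p.1 : ℝ)| ≤ μ}).toReal + ε / 2 := by
  obtain ⟨hε0, hε1⟩ := hε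
  have h2ε : 0 < 2 - ε := by linarith
  have hL0 : 0 ≤ L := by
    rw [hL]
    apply mul_nonneg (by positivity)
    apply Real.log_nonneg
    rw [le_div_iff₀ hε0]; linarith
  have hLμ : 4 * L * μ = Real.log ((2 - ε) / ε) := by
    rw [hL]; field_simp
  have hexpμ : Real.exp (-(4 * L * μ)) = ε / (2 - ε) := by
    rw [hLμ, Real.exp_neg, Real.exp_log (by positivity), inv_div]
  have hexpμ' : Real.exp (4 * L * μ) = (2 - ε) / ε := by
    rw [hLμ, Real.exp_log (by positivity)]
  -- basic bounds on phiSig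
  have hφpos : ∀ a : ℝ, 0 < phiSig L a := by
    intro a; unfold phiSig; positivity
  have hφlt1 : ∀ a : ℝ, phiSig L a < 1 := by
    intro a; unfold phiSig
    have he := Real.exp_pos (-4 * L * a)
    rw [div_lt_one (by positivity)]; linarith
  -- bound on the good side, label 1
  have hA : ∀ a : ℝ, μ ≤ a → 1 - ε / 2 ≤ phiSig L a := by
    intro a ha
    have h1 : Real.exp (-4 * L * a) ≤ ε / (2 - ε) := by
      calc Real.exp (-4 * L * a) ≤ Real.exp (-(4 * L * μ)) := by
            apply Real.exp_le_exp.mpr; nlinarith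
        _ = ε / (2 - ε) := hexpμ
    have h1' : Real.exp (-4 * L * a) * (2 - ε) ≤ ε := (le_div_iff₀ h2ε).mp h1
    have hden : 0 < 1 + Real.exp (-4 * L * a) := by positivity
    unfold phiSig
    rw [le_div_iff₀ hden]
    nlinarith [Real.exp_pos (-4 * L * a)]
  -- bound on the good side, label 0
  have hB : ∀ a : ℝ, a ≤ -μ → phiSig L a ≤ ε / 2 := by
    intro a ha
    have h1 : (2 - ε) / ε ≤ Real.exp (-4 * L * a) := by
      calc (2 - ε) / ε = Real.exp (4 * L * μ) := hexpμ'.symm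
        _ ≤ Real.exp (-4 * L * a) := by apply Real.exp_le_exp.mpr; nlinarith
    have h1' : 2 - ε ≤ Real.exp (-4 * L * a) * ε := (div_le_iff₀ hε0).mp h1
    have hden : 0 < 1 + Real.exp (-4 * L * a) := by positivity
    unfold phiSig
    rw [div_le_div_iff₀ hden (by norm_num : (0:ℝ) < 2)]
    nlinarith
  -- the bad set
  set S : Set (E × ℝ) := {p : E × ℝ |
        ((if 0 < (inner ℝ w p.1 : ℝ) then (1 : ℝ) else 0) ≠ p.2) ∨
          |(inner ℝ w p.1 : ℝ)| ≤ μ} with hSdef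
  have hc : Continuous fun p : E × ℝ => (inner ℝ w p.1 : ℝ) :=
    Continuous.inner continuous_const continuous_fst
  have hinner : Measurable fun p : E × ℝ => (inner ℝ w p.1 : ℝ) := hc.measurable
  have hS : MeasurableSet S := by
    apply MeasurableSet.union
    · have hite : Measurable fun p : E × ℝ =>
          (if 0 < (inner ℝ w p.1 : ℝ) then (1 : ℝ) else 0) :=
        Measurable.ite (measurableSet_lt measurable_const hinner)
          measurable_const measurable_const
      exact (measurableSet_eq_fun hite measurable_snd).compl
    · exact measurableSet_le hinner.abs measurable_const
  have hφcont : Continuous fun p : E × ℝ => phiSig L (inner ℝ w p.1) := by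
    unfold phiSig
    apply Continuous.div continuous_const
    · exact continuous_const.add (Real.continuous_exp.comp (continuous_const.mul hc))
    · intro p
      have := Real.exp_pos (-4 * L * (inner ℝ w p.1 : ℝ))
      positivity
  set g : E × ℝ → ℝ := fun p => |phiSig L (inner ℝ w p.1) - p.2| with hgdef
  have hg_meas : AEStronglyMeasurable g D :=
    ((hφcont.measurable.sub measurable_snd).abs).aestronglyMeasurable
  have hgle1 : ∀ᵐ p ∂D, ‖g p‖ ≤ 1 := by
    filter_upwards [hD] with p hp
    obtain ⟨-, hy⟩ := hp
    have h1 := hφpos (inner ℝ w p.1)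
    have h2 := hφlt1 (inner ℝ w p.1)
    rw [Real.norm_eq_abs, abs_abs]
    rcases hy with hy | hy <;> rw [hy] <;> rw [abs_le] <;> constructor <;> linarith
  have hg_int : Integrable g D := Integrable.mono' (integrable_const 1) hg_meas hgle1
  set h : E × ℝ → ℝ := fun p => S.indicator (fun _ => (1 : ℝ)) p + ε / 2 with hhdef
  have hind_int : Integrable (S.indicator (fun _ => (1 : ℝ))) D :=
    (integrable_const 1).indicator hS
  have hh_int : Integrable h D := hind_int.add (integrable_const (ε / 2))
  have hle : g ≤ᵐ[D] h := by
    filter_upwards [hD] with p hp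
    obtain ⟨-, hy⟩ := hp
    have h1 := hφpos (inner ℝ w p.1)
    have h2 := hφlt1 (inner ℝ w p.1)
    by_cases hpS : p ∈ S
    · simp only [hhdef, Set.indicator_of_mem hpS]
      have : g p ≤ 1 := by
        rcases hy with hy | hy <;> simp only [hgdef, hy] <;> rw [abs_le] <;>
          constructor <;> linarith
      linarith
    · simp only [hhdef, Set.indicator_of_notMem hpS]
      have hpS' : ((if 0 < (inner ℝ w p.1 : ℝ) then (1 : ℝ) else 0) = p.2) ∧
          μ < |(inner ℝ w p.1 : ℝ)| := by
        simp only [hSdef, Set.mem_setOf_eq] at hpS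
        push_neg at hpS
        exact hpS
      obtain ⟨heq, hmar⟩ := hpS'
      rcases hy with hy | hy
      · -- y = 0, so a ≤ -μ
        have ha : (inner ℝ w p.1 : ℝ) ≤ 0 := by
          by_contra hcon
          push_neg at hcon
          rw [if_pos hcon, hy] at heq
          norm_num at heq
        have ha' : (inner ℝ w p.1 : ℝ) ≤ -μ := by
          rw [abs_of_nonpos ha] at hmar; linarith
        have := hB _ ha'
        simp only [hgdef, hy]
        rw [abs_of_nonneg (by linarith)]
        linarith
      · -- y = 1, so a ≥ μ
        have ha : 0 < (inner ℝ w p.1 : ℝ) := by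
          by_contra hcon
          rw [if_neg hcon, hy] at heq
          norm_num at heq
        have ha' : μ ≤ (inner ℝ w p.1 : ℝ) := by
          rw [abs_of_pos ha] at hmar; linarith
        have := hA _ ha'
        simp only [hgdef, hy]
        rw [abs_of_nonpos (by linarith)]
        linarith
  calc (∫ p, |phiSig L (inner ℝ w p.1) - p.2| ∂D) = ∫ p, g p ∂D := rfl
    _ ≤ ∫ p, h p ∂D := integral_mono_ae hg_int hh_int hle
    _ = (D S).toReal + ε / 2 := by
        simp only [hhdef]
        rw [integral_add hind_int (integrable_const (ε / 2)),
          integral_indicator_const _ hS, integral_const]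
        simp
        rfl
end
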